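/- Let {X, φ_i} be a fundamental limit space for the CIS {X_i, Y_i, f_i}. Then φ_i(X_i) is a closed subset of X, for every i ∈ ℕ. -/

import Mathlib

universe u v w

/-- A closed injective system (CIS): nonempty topological spaces `X i`, closed subspaces
`Y i ⊆ X i`, and closed injective continuous maps `f i : Y i → X (i+1)`, modeled as total
maps `f i : X i → X (i+1)` whose relevant properties are only required on `Y i`. -/
structure CIS where
  X : ℕ → Type u
  topX : ∀ i, TopologicalSpace (X i)
  nonemptyX : ∀ i, Nonempty (X i)
  Y : ∀ i, Set (X i)
  closedY : ∀ i, IsClosed (Y i)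
  f : ∀ i, X i → X (i + 1)
  f_contOn : ∀ i, ContinuousOn (f i) (Y i)
  f_injOn : ∀ i, Set.InjOn (f i) (Y i)
  f_closedOn : ∀ i (C : Set (X i)), IsClosed C → C ⊆ Y i → IsClosed (f i '' C)

instance (S : CIS) (i : ℕ) : TopologicalSpace (S.X i) := S.topX i

/-- The iterated composition `f_{j-1} ∘ ⋯ ∘ f_i : X i → X j` (total extension of `f_{i,j-1}`). -/
def CIS.T (S : CIS) {i j : ℕ} (h : i ≤ j) (x : S.X i) : S.X j :=
  Nat.leRecOn h (fun {k} y => S.f k y) x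

/-- The set `Y_{i,j}` (domain of `f_{i,j}`): points of `Y i` whose iterated images remain in
the sets `Y k` for all `i ≤ k ≤ j`. -/
def CIS.YY (S : CIS) (i j : ℕ) : Set (S.X i) :=
  {x | ∀ k, ∀ h : i ≤ k, k ≤ j → S.T h x ∈ S.Y k}

/-- `f i` and `f j` are semicomponible (`i ≤ j`): every map is semicomponible with itself,
and for `i < j` semicomponibility means that the domain `Y_{i,j}` is nonempty. -/
def CIS.Semicomp (S : CIS) (i j : ℕ) : Prop :=
  i = j ∨ (i < j ∧ (S.YY i j).Nonempty)

/-- A limit space `{L, φ}` for a CIS. -/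
structure IsLimitSpace (S : CIS) (L : Type v) [TopologicalSpace L]
    (φ : ∀ i, S.X i → L) : Prop where
  covers : ⋃ i, Set.range (φ i) = Set.univ
  embedding : ∀ i, Topology.IsEmbedding (φ i)
  l3 : ∀ i j, ∀ hij : i < j, S.Semicomp i j →
    Set.range (φ i) ∩ Set.range (φ j) = φ j '' (S.T hij.le '' S.YY i (j - 1))
  l3' : ∀ i j, ∀ hij : i < j, S.Semicomp i j → ∀ (xi : S.X i) (xj : S.X j),
    φ i xi = φ j xj → xi ∈ S.YY i (j - 1) ∧ xj = S.T hij.le xi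
  l4 : ∀ i j, i < j → ¬ S.Semicomp i j → Set.range (φ i) ∩ Set.range (φ j) = ∅

/-- A fundamental limit space: a limit space whose topology is the weak topology
induced by the maps `φ i`. -/
structure IsFundamentalLimitSpace (S : CIS) (L : Type v) [TopologicalSpace L]
    (φ : ∀ i, S.X i → L) extends IsLimitSpace S L φ : Prop where
  weakTopology : ∀ A : Set L, IsClosed A ↔ ∀ i, IsClosed (φ i ⁻¹' A)

/-- A cis-morphism between closed injective systems. -/
structure CISMorphism (S S' : CIS) where
  h : ∀ i, S.X i → S'.X i
  cont : ∀ i, Continuous (h i)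
  closedMap : ∀ i, IsClosedMap (h i)
  mapsY : ∀ i, h i '' S.Y i ⊆ S'.Y i
  comm : ∀ i, ∀ y ∈ S.Y i, h (i + 1) (S.f i y) = S'.f i (h i y)

/-- A cis-isomorphism: each `h i` is a homeomorphism carrying `Y i` onto `Y' i`. -/
def CISMorphism.IsIso {S S' : CIS} (m : CISMorphism S S') : Prop :=
  ∀ i, Function.Bijective (m.h i) ∧ m.h i '' S.Y i = S'.Y i

/-- The generating relation identifying each `y ∈ Y i` with `f i y ∈ X (i+1)`. -/
def CIS.Rel0 (S : CIS) (a b : Σ i, S.X i) : Prop :=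
  a.2 ∈ S.Y a.1 ∧ b = ⟨a.1 + 1, S.f a.1 a.2⟩

/-- The relation `~` on the coproduct `⨿ X i` for an inductive CIS:
`⟨i, x⟩ ~ ⟨j, y⟩` iff `y = f_i^j x` when `i ≤ j`, and `x = f_j^i y` when `j < i`. -/
def CIS.IndRel (S : CIS) (a b : Σ i, S.X i) : Prop :=
  (∀ h : a.1 ≤ b.1, S.T h a.2 = b.2) ∧ (∀ h : b.1 < a.1, S.T h.le b.2 = a.2)

/-- A CIS is finitely semicomponible if for each `i` only finitely many `j` are such that
`f i, f j` (or `f j, f i`) are semicomponible. -/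
def CIS.FinitelySemicomp (S : CIS) : Prop :=
  ∀ i, {j | S.Semicomp i j ∨ S.Semicomp j i}.Finite

namespace CISAux

theorem T_refl (S : CIS) {i : ℕ} (x : S.X i) : S.T (le_refl i) x = x :=
  Nat.leRecOn_self x

theorem T_succ (S : CIS) {i j : ℕ} (h : i ≤ j) (h' : i ≤ j + 1) (x : S.X i) :
    S.T h' x = S.f j (S.T h x) :=
  Nat.leRecOn_succ h x

theorem YY_self (S : CIS) (i : ℕ) : S.YY i i = S.Y i := by
  ext x
  constructor
  · intro hx
    have := hx i (le_refl i) (le_refl i)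
    rwa [T_refl] at this
  · intro hx k hk hk'
    have : k = i := le_antisymm hk' hk
    subst this
    rwa [T_refl]

theorem YY_succ (S : CIS) {i j : ℕ} (h : i ≤ j) :
    S.YY i (j + 1) = S.YY i j ∩ (S.T (h.trans (Nat.le_succ j)) ⁻¹' S.Y (j + 1)) := by
  ext x
  constructor
  · intro hx
    exact ⟨fun k hk hk' => hx k hk (hk'.trans (Nat.le_succ j)),
      hx (j + 1) (h.trans (Nat.le_succ j)) (le_refl _)⟩
  · rintro ⟨hx, hx'⟩ k hk hk'
    rcases Nat.lt_or_ge k (j + 1) with hkj | hkj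
    · exact hx k hk (Nat.lt_succ_iff.mp hkj)
    · have : k = j + 1 := le_antisymm hk' hkj
      subst this
      exact hx'

/-- Master lemma: closedness, continuity, injectivity facts about `YY i j` and the
iterated maps, by induction on `j ≥ i`. -/
theorem master (S : CIS) (i : ℕ) : ∀ j (h : i ≤ j),
    IsClosed (S.YY i j) ∧
    ContinuousOn (S.T h) (S.YY i j) ∧
    Set.MapsTo (S.T h) (S.YY i j) (S.Y j) ∧
    Set.InjOn (S.T h) (S.YY i j) ∧
    Set.InjOn (S.T (h.trans (Nat.le_succ j))) (S.YY i j) ∧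
    IsClosed (S.T h '' S.YY i j) ∧
    IsClosed (S.T (h.trans (Nat.le_succ j)) '' S.YY i j) := by
  intro j h
  induction j, h using Nat.le_induction with
  | base =>
    have e1 : S.T (le_refl i) = id := funext fun x => T_refl S x
    have e2 : S.T ((le_refl i).trans (Nat.le_succ i)) = S.f i := funext fun x => by
      rw [T_succ S (le_refl i), T_refl]
    rw [YY_self, e1, e2]
    refine ⟨S.closedY i, continuousOn_id, fun x hx => hx, fun a _ b _ hab => hab,
      S.f_injOn i, ?_, S.f_closedOn i _ (S.closedY i) le_rfl⟩
    rw [Set.image_id]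
    exact S.closedY i
  | succ j hij IH =>
    obtain ⟨hcl, hcont, hmaps, hinj, hinj', himg, himg'⟩ := IH
    have h1 : i ≤ j + 1 := hij.trans (Nat.le_succ j)
    have h2 : i ≤ j + 2 := h1.trans (Nat.le_succ (j + 1))
    have e1 : S.T h1 = S.f j ∘ S.T hij := funext fun x => T_succ S hij h1 x
    have e2 : S.T h2 = S.f (j + 1) ∘ S.T h1 := funext fun x => T_succ S h1 h2 x
    have eYY : S.YY i (j + 1) = S.YY i j ∩ (S.T h1 ⁻¹' S.Y (j + 1)) := YY_succ S hij
    have c1 : ContinuousOn (S.T h1) (S.YY i j) := by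
      rw [e1]; exact (S.f_contOn j).comp hcont hmaps
    have hsub : S.YY i (j + 1) ⊆ S.YY i j := by rw [eYY]; exact Set.inter_subset_left
    have hclosed1 : IsClosed (S.YY i (j + 1)) := by
      rw [eYY]; exact c1.preimage_isClosed_of_isClosed hcl (S.closedY (j + 1))
    have hmaps1 : Set.MapsTo (S.T h1) (S.YY i (j + 1)) (S.Y (j + 1)) := by
      intro x hx
      exact hx (j + 1) h1 (le_refl _)
    have hinj1 : Set.InjOn (S.T h1) (S.YY i (j + 1)) := hinj'.mono hsub
    have himg1 : IsClosed (S.T h1 '' S.YY i (j + 1)) := by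
      rw [eYY, Set.image_inter_preimage]
      exact himg'.inter (S.closedY (j + 1))
    have hinj2 : Set.InjOn (S.T h2) (S.YY i (j + 1)) := by
      rw [e2]
      exact (S.f_injOn (j + 1)).comp hinj1 hmaps1
    have himg2 : IsClosed (S.T h2 '' S.YY i (j + 1)) := by
      rw [e2, Set.image_comp]
      exact S.f_closedOn (j + 1) _ himg1 (Set.mapsTo_iff_image_subset.mp hmaps1)
    exact ⟨hclosed1, c1.mono hsub, hmaps1, hinj1, hinj2, himg1, himg2⟩

end CISAux

theorem stmt7 (S : CIS) (L : Type v) [TopologicalSpace L] (φ : ∀ i, S.X i → L)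
    (hL : IsFundamentalLimitSpace S L φ) (i : ℕ) :
    IsClosed (Set.range (φ i)) := by
  rw [hL.weakTopology]
  intro j
  rcases lt_trichotomy i j with hij | rfl | hji
  · -- i < j
    by_cases hsc : S.Semicomp i j
    · have key : φ j ⁻¹' Set.range (φ i) = S.T hij.le '' S.YY i (j - 1) := by
        ext x
        constructor
        · intro hx
          have hx' : φ j x ∈ Set.range (φ i) ∩ Set.range (φ j) := ⟨hx, ⟨x, rfl⟩⟩
          rw [hL.l3 i j hij hsc] at hx'
          obtain ⟨z, hz, hzx⟩ := hx'
          rwa [(hL.embedding j).injective hzx] at hz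
        · intro hx
          have hx' : φ j x ∈ φ j '' (S.T hij.le '' S.YY i (j - 1)) := ⟨_, hx, rfl⟩
          rw [← hL.l3 i j hij hsc] at hx'
          exact hx'.1
      rw [key]
      obtain ⟨m, rfl⟩ : ∃ m, j = m + 1 := ⟨j - 1, by omega⟩
      have him : i ≤ m := by omega
      exact (CISAux.master S i m him).2.2.2.2.2.2
    · have key : φ j ⁻¹' Set.range (φ i) = ∅ := by
        ext x
        simp only [Set.mem_preimage, Set.mem_empty_iff_false, iff_false]
        intro hx
        have hx' : φ j x ∈ Set.range (φ i) ∩ Set.range (φ j) := ⟨hx, ⟨x, rfl⟩⟩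
        rw [hL.l4 i j hij hsc] at hx'
        exact hx'
      rw [key]
      exact isClosed_empty
  · -- i = j
    have key : φ i ⁻¹' Set.range (φ i) = Set.univ := by
      ext x; simp
    rw [key]
    exact isClosed_univ
  · -- j < i
    by_cases hsc : S.Semicomp j i
    · have key : φ j ⁻¹' Set.range (φ i) = S.YY j (i - 1) := by
        ext x
        constructor
        · rintro ⟨y, hy⟩
          exact (hL.l3' j i hji hsc x y hy.symm).1
        · intro hx
          have h3 := hL.l3 j i hji hsc
          have hx' : φ i (S.T hji.le x) ∈ φ i '' (S.T hji.le '' S.YY j (i - 1)) :=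
            ⟨_, ⟨_, hx, rfl⟩, rfl⟩
          rw [← h3] at hx'
          obtain ⟨x', hx'eq⟩ := hx'.1
          obtain ⟨hx'mem, hTeq⟩ := hL.l3' j i hji hsc x' (S.T hji.le x) hx'eq
          obtain ⟨m, rfl⟩ : ∃ m, i = m + 1 := ⟨i - 1, by omega⟩
          have hjm : j ≤ m := by omega
          have hinj := (CISAux.master S j m hjm).2.2.2.2.1
          have : x = x' := hinj hx hx'mem hTeq
          rw [this]
          exact ⟨_, hx'eq.symm⟩
      rw [key]
      obtain ⟨m, rfl⟩ : ∃ m, i = m + 1 := ⟨i - 1, by omega⟩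
      have hjm : j ≤ m := by omega
      exact (CISAux.master S j m hjm).1
    · have key : φ j ⁻¹' Set.range (φ i) = ∅ := by
        ext x
        simp only [Set.mem_preimage, Set.mem_empty_iff_false, iff_false]
        intro hx
        have hx' : φ j x ∈ Set.range (φ j) ∩ Set.range (φ i) := ⟨⟨x, rfl⟩, hx⟩
        rw [hL.l4 j i hji hsc] at hx'
        exact hx'
      rw [key]
      exact isClosed_empty
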